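/- For any two sub-σ-algebras 𝒢, ℋ of ℱ, the φ-mixing coefficient satisfies 2φ(𝒢, ℋ) = sup{ ‖E[g|𝒢] − E g‖_{L^∞} : g ∈ L^∞(Ω, ℋ, P), ‖g‖_{L^∞} ≤ 1 }. -/

import Mathlib

open MeasureTheory
open scoped ENNReal

/-- The uniform (φ) mixing coefficient between two sub-σ-algebras. -/
noncomputable def phiMix {Ω : Type*} {m0 : MeasurableSpace Ω} (μ : Measure Ω)
    (G H : MeasurableSpace Ω) : ℝ :=
  sSup {x : ℝ | ∃ A B : Set Ω, MeasurableSet[G] A ∧ MeasurableSet[H] B ∧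
    0 < (μ A).toReal ∧ x = |(μ (A ∩ B)).toReal / (μ A).toReal - (μ B).toReal|}

namespace PhiMixAux

/-! ### Measurability helpers (explicit σ-algebra) -/

section MeasHelpers

variable {Ω : Type*}

lemma m_ind (m : MeasurableSpace Ω) {A : Set Ω} (hA : MeasurableSet[m] A) (c : ℝ) :
    Measurable[m] (A.indicator fun _ => c) :=
  measurable_const.indicator hA

lemma m_setle (m : MeasurableSpace Ω) {k : Ω → ℝ} (hk : Measurable[m] k) (c : ℝ) :
    MeasurableSet[m] {ω | c ≤ k ω} :=
  measurableSet_le measurable_const hk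

lemma m_indsub (m : MeasurableSpace Ω) {B : Set Ω} (hB : MeasurableSet[m] B) :
    Measurable[m] (fun ω => B.indicator (fun _ => (2 : ℝ)) ω - 1) :=
  (measurable_const.indicator hB).sub measurable_const

lemma m_clamp (m : MeasurableSpace Ω) {g : Ω → ℝ} (hg : Measurable[m] g) :
    Measurable[m] (fun ω => max (-1) (min (g ω) 1)) :=
  measurable_const.max (hg.min measurable_const)

lemma m_neg (m : MeasurableSpace Ω) {g : Ω → ℝ} (hg : Measurable[m] g) :
    Measurable[m] (-g) :=
  hg.neg

lemma m_sm (m : MeasurableSpace Ω) {g : Ω → ℝ} (hg : Measurable[m] g) :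
    StronglyMeasurable[m] g :=
  hg.stronglyMeasurable

lemma m_univ (m : MeasurableSpace Ω) : MeasurableSet[m] (Set.univ : Set Ω) :=
  MeasurableSet.univ

lemma m_empty (m : MeasurableSpace Ω) : MeasurableSet[m] (∅ : Set Ω) :=
  MeasurableSet.empty

end MeasHelpers

/-! ### Integral helpers (single σ-algebra context) -/

section OneSpace

variable {Ω : Type*} {m0 : MeasurableSpace Ω} (μ : Measure Ω) [IsProbabilityMeasure μ]

lemma integrable_of_abs_le_one {g : Ω → ℝ} (hgm : Measurable g) (hgb : ∀ ω, |g ω| ≤ 1) :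
    Integrable g μ :=
  ⟨hgm.aestronglyMeasurable, HasFiniteIntegral.of_bounded (C := 1)
    (Filter.Eventually.of_forall fun ω => by simpa [Real.norm_eq_abs] using hgb ω)⟩

lemma h_step1 {g : Ω → ℝ} {A : Set Ω} (hA : MeasurableSet A) :
    (∫ ω in A, g ω ∂μ) = ∫ ω, (g * A.indicator fun _ => (1 : ℝ)) ω ∂μ := by
  rw [← integral_indicator hA]
  congr 1
  funext ω
  by_cases h : ω ∈ A <;> simp [Set.indicator_apply, h]

lemma h_absle {g h : Ω → ℝ} (hgm : Measurable g) (hgb : ∀ ω, |g ω| ≤ 1)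
    (hh : Integrable h μ) :
    |∫ ω, g ω * h ω ∂μ| ≤ ∫ ω, |h ω| ∂μ := by
  have hint : Integrable (fun ω => g ω * h ω) μ :=
    hh.bdd_mul hgm.aestronglyMeasurable
      (Filter.Eventually.of_forall fun ω => by simpa [Real.norm_eq_abs] using hgb ω)
  have h0 : ‖∫ ω, g ω * h ω ∂μ‖ ≤ ∫ ω, ‖g ω * h ω‖ ∂μ := norm_integral_le_integral_norm _
  rw [Real.norm_eq_abs] at h0
  calc |∫ ω, g ω * h ω ∂μ| ≤ ∫ ω, ‖g ω * h ω‖ ∂μ := h0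
  _ ≤ ∫ ω, |h ω| ∂μ := by
      refine integral_mono hint.norm hh.abs fun ω => ?_
      simp only [Real.norm_eq_abs, abs_mul]
      exact mul_le_of_le_one_left (abs_nonneg _) (hgb ω)

lemma h_step3 {g k : Ω → ℝ} (hgk : Integrable (fun ω => g ω * k ω) μ)
    (hg : Integrable g μ) (c : ℝ) :
    (∫ ω, g ω * k ω ∂μ) - c * ∫ ω, g ω ∂μ = ∫ ω, g ω * (k ω - c) ∂μ := by
  have h1 : ∀ ω, g ω * (k ω - c) = g ω * k ω - c * g ω := fun ω => by ring
  simp_rw [h1]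
  rw [integral_sub hgk (hg.const_mul c), integral_const_mul]

lemma h_split {k : Ω → ℝ} (c : ℝ) (hk : Integrable k μ)
    (hP : MeasurableSet {ω | c ≤ k ω}) :
    ∫ ω, |k ω - c| ∂μ =
      (∫ ω in {ω | c ≤ k ω}, (k ω - c) ∂μ) + ∫ ω in {ω | c ≤ k ω}ᶜ, (c - k ω) ∂μ := by
  have hint : Integrable (fun ω => |k ω - c|) μ := (hk.sub (integrable_const c)).abs
  rw [← integral_add_compl hP hint]
  congr 1
  · refine setIntegral_congr_fun hP fun ω hω => ?_
    have h : c ≤ k ω := hω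
    exact abs_of_nonneg (by linarith)
  · refine setIntegral_congr_fun hP.compl fun ω hω => ?_
    have h : ¬ c ≤ k ω := hω
    rw [abs_of_neg (by linarith)]
    ring

lemma h_setind {A : Set Ω} (hA : MeasurableSet A) (P : Set Ω) :
    ∫ ω in P, A.indicator (fun _ => (1 : ℝ)) ω ∂μ = (μ (A ∩ P)).toReal := by
  rw [integral_indicator_const (1 : ℝ) hA, measureReal_def, Measure.restrict_apply hA]
  simp

lemma h_subconst {k : Ω → ℝ} (hk : Integrable k μ) (P : Set Ω) (c : ℝ) :
    ∫ ω in P, (k ω - c) ∂μ = (∫ ω in P, k ω ∂μ) - c * (μ P).toReal := by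
  rw [integral_sub hk.integrableOn (integrable_const c).integrableOn, setIntegral_const]
  simp [smul_eq_mul, mul_comm, measureReal_def]

lemma h_constsub {k : Ω → ℝ} (hk : Integrable k μ) (P : Set Ω) (c : ℝ) :
    ∫ ω in P, (c - k ω) ∂μ = c * (μ P).toReal - ∫ ω in P, k ω ∂μ := by
  rw [integral_sub (integrable_const c).integrableOn hk.integrableOn, setIntegral_const]
  simp [smul_eq_mul, mul_comm, measureReal_def]

lemma h_constle {f : Ω → ℝ} {A : Set Ω} {c : ℝ} (hA : MeasurableSet A)
    (hf : ∀ ω ∈ A, c ≤ f ω) (hfi : IntegrableOn f A μ) :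
    c * (μ A).toReal ≤ ∫ ω in A, f ω ∂μ :=
  by simpa [measureReal_def, smul_eq_mul, mul_comm] using
    setIntegral_ge_of_const_le_real hA (measure_ne_top μ A) hf hfi

lemma h_setbound {f : Ω → ℝ} {C : ℝ} (hb : ∀ᵐ ω ∂μ, ‖f ω‖ ≤ C) (A : Set Ω) :
    |∫ ω in A, f ω ∂μ| ≤ C * (μ A).toReal := by
  have h := norm_integral_le_of_norm_le_const (μ := μ.restrict A) (f := f) (C := C)
    (ae_restrict_of_ae hb)
  simpa [Real.norm_eq_abs, Measure.restrict_apply_univ, measureReal_def] using h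

lemma h_indint {B : Set Ω} (hB : MeasurableSet B) (c : ℝ) :
    Integrable (B.indicator fun _ => c) μ :=
  (integrable_const c).indicator hB

lemma h_wint1 {A B : Set Ω} (hA : MeasurableSet A) (hB : MeasurableSet B) :
    ∫ ω in A, (B.indicator (fun _ => (2 : ℝ)) ω - 1) ∂μ =
      2 * (μ (B ∩ A)).toReal - (μ A).toReal := by
  rw [integral_sub (h_indint μ hB 2).integrableOn (integrable_const (1 : ℝ)).integrableOn,
    integral_indicator_const (2 : ℝ) hB, measureReal_def, Measure.restrict_apply hB, setIntegral_const]
  simp [smul_eq_mul, measureReal_def]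
  ring

lemma h_wint2 {B : Set Ω} (hB : MeasurableSet B) :
    ∫ ω, (B.indicator (fun _ => (2 : ℝ)) ω - 1) ∂μ = 2 * (μ B).toReal - 1 := by
  rw [integral_sub (h_indint μ hB 2) (integrable_const (1 : ℝ)),
    integral_indicator_const (2 : ℝ) hB, integral_const]
  simp [measure_univ, smul_eq_mul, measureReal_def]
  ring

lemma h_intOn {f : Ω → ℝ} (hf : Integrable f μ) (A : Set Ω) : IntegrableOn f A μ :=
  hf.integrableOn

lemma h_zero_restrict {A : Set Ω} (hA0 : μ A = 0) {g : Ω → ℝ} :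
    (∫ ω in A, g ω ∂μ) = 0 := by
  rw [Measure.restrict_eq_zero.mpr hA0]
  simp

end OneSpace

/-! ### The φ-mixing set -/

section TwoSpace

variable {Ω : Type*} {m0 : MeasurableSpace Ω} (μ : Measure Ω) [IsProbabilityMeasure μ]
  (G H : MeasurableSpace Ω)

/-- The defining set of the φ-mixing coefficient. -/
def phiSet : Set ℝ :=
  {x : ℝ | ∃ A B : Set Ω, MeasurableSet[G] A ∧ MeasurableSet[H] B ∧
    0 < (μ A).toReal ∧ x = |(μ (A ∩ B)).toReal / (μ A).toReal - (μ B).toReal|}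

lemma phiMix_eq : phiMix μ G H = sSup (phiSet μ G H) := rfl

lemma zero_mem_phiSet : (0 : ℝ) ∈ phiSet μ G H := by
  refine ⟨Set.univ, ∅, m_univ G, m_empty H, ?_, ?_⟩
  · simp
  · simp

lemma phiSet_bddAbove : BddAbove (phiSet μ G H) := by
  refine ⟨1, ?_⟩
  rintro x ⟨A, B, hA, hB, hApos, rfl⟩
  have hm : (μ (A ∩ B)).toReal ≤ (μ A).toReal :=
    ENNReal.toReal_mono (measure_ne_top μ A) (measure_mono Set.inter_subset_left)
  have h1 : (μ (A ∩ B)).toReal / (μ A).toReal ≤ 1 := div_le_one_of_le₀ hm hApos.le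
  have h0 : 0 ≤ (μ (A ∩ B)).toReal / (μ A).toReal :=
    div_nonneg ENNReal.toReal_nonneg hApos.le
  have hb0 : 0 ≤ (μ B).toReal := ENNReal.toReal_nonneg
  have hb1 : (μ B).toReal ≤ 1 := by
    have := ENNReal.toReal_mono (measure_ne_top μ Set.univ) (measure_mono (Set.subset_univ B))
    simpa [measure_univ] using this
  exact abs_le.mpr ⟨by linarith, by linarith⟩

lemma phiMix_nonneg : 0 ≤ phiMix μ G H :=
  le_csSup (phiSet_bddAbove μ G H) (zero_mem_phiSet μ G H)

lemma abs_le_phiMix {A B : Set Ω} (hA : MeasurableSet[G] A) (hB : MeasurableSet[H] B)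
    (hApos : 0 < (μ A).toReal) :
    |(μ (A ∩ B)).toReal / (μ A).toReal - (μ B).toReal| ≤ phiMix μ G H :=
  le_csSup (phiSet_bddAbove μ G H) ⟨A, B, hA, hB, hApos, rfl⟩

/-- Key inequality: `|∫_A g - μ(A) ∫ g| ≤ 2 φ μ(A)` for `H`-measurable `g` with `|g| ≤ 1`. -/
lemma key_abs (hG : G ≤ m0) (hH : H ≤ m0) {g : Ω → ℝ} (hgm : Measurable[H] g)
    (hgb : ∀ ω, |g ω| ≤ 1) {A : Set Ω} (hA : MeasurableSet[G] A) :
    |(∫ ω in A, g ω ∂μ) - (μ A).toReal * ∫ ω, g ω ∂μ| ≤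
      2 * phiMix μ G H * (μ A).toReal := by
  by_cases hA0 : μ A = 0
  · rw [h_zero_restrict μ hA0, hA0]
    simp
  have hApos : 0 < (μ A).toReal := ENNReal.toReal_pos hA0 (measure_ne_top μ A)
  set c := (μ A).toReal with hc
  set χ : Ω → ℝ := A.indicator (fun _ => (1 : ℝ)) with hχ
  have hχb : ∀ ω, |χ ω| ≤ 1 := by
    intro ω; by_cases h : ω ∈ A <;> simp [hχ, Set.indicator_apply, h]
  have hχmeas : Measurable[m0] χ := m_ind m0 (hG A hA) 1
  have hχint : Integrable χ μ := integrable_of_abs_le_one μ hχmeas hχb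
  have hgm0 : Measurable[m0] g := hgm.mono hH le_rfl
  have hgint : Integrable g μ := integrable_of_abs_le_one μ hgm0 hgb
  set k : Ω → ℝ := μ[χ|H] with hk
  have hkint : Integrable k μ := integrable_condExp
  have step1 : (∫ ω in A, g ω ∂μ) = ∫ ω, (g * χ) ω ∂μ := h_step1 μ (hG A hA)
  have hgχint : Integrable (g * χ) μ :=
    hχint.bdd_mul hgm0.aestronglyMeasurable
      (Filter.Eventually.of_forall fun ω => by simpa [Real.norm_eq_abs] using hgb ω)
  have step2 : ∫ ω, (g * χ) ω ∂μ = ∫ ω, g ω * k ω ∂μ := by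
    calc ∫ ω, (g * χ) ω ∂μ = ∫ ω, (μ[g * χ|H]) ω ∂μ := (integral_condExp hH).symm
    _ = ∫ ω, (g * μ[χ|H]) ω ∂μ :=
        integral_congr_ae (condExp_mul_of_stronglyMeasurable_left (m_sm H hgm) hgχint hχint)
    _ = ∫ ω, g ω * k ω ∂μ := rfl
  have hgkint : Integrable (fun ω => g ω * k ω) μ :=
    hkint.bdd_mul hgm0.aestronglyMeasurable
      (Filter.Eventually.of_forall fun ω => by simpa [Real.norm_eq_abs] using hgb ω)
  have hkc_int : Integrable (fun ω => k ω - c) μ := hkint.sub (integrable_const c)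
  have step3 : (∫ ω, g ω * k ω ∂μ) - c * ∫ ω, g ω ∂μ = ∫ ω, g ω * (k ω - c) ∂μ :=
    h_step3 μ hgkint hgint c
  have hbound1 : |∫ ω, g ω * (k ω - c) ∂μ| ≤ ∫ ω, |k ω - c| ∂μ :=
    h_absle μ hgm0 hgb hkc_int
  have hkSM : StronglyMeasurable[H] k := stronglyMeasurable_condExp
  set P : Set Ω := {ω | c ≤ k ω} with hP
  have hPm : MeasurableSet[H] P := m_setle H hkSM.measurable c
  have hPm0 : MeasurableSet[m0] P := hH P hPm
  have split : ∫ ω, |k ω - c| ∂μ =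
      (∫ ω in P, (k ω - c) ∂μ) + ∫ ω in Pᶜ, (c - k ω) ∂μ := h_split μ c hkint hPm0
  have hkP : ∫ ω in P, k ω ∂μ = (μ (A ∩ P)).toReal := by
    rw [hk, setIntegral_condExp hH hχint hPm, hχ]
    exact h_setind μ (hG A hA) P
  have hkPc : ∫ ω in Pᶜ, k ω ∂μ = (μ (A ∩ Pᶜ)).toReal := by
    rw [hk, setIntegral_condExp hH hχint hPm.compl, hχ]
    exact h_setind μ (hG A hA) Pᶜ
  have e1 : ∫ ω in P, (k ω - c) ∂μ = (μ (A ∩ P)).toReal - c * (μ P).toReal := by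
    rw [h_subconst μ hkint P c, hkP]
  have e2 : ∫ ω in Pᶜ, (c - k ω) ∂μ = c * (μ Pᶜ).toReal - (μ (A ∩ Pᶜ)).toReal := by
    rw [h_constsub μ hkint Pᶜ c, hkPc]
  have b1 : (μ (A ∩ P)).toReal - c * (μ P).toReal ≤ phiMix μ G H * c := by
    have h := abs_le_phiMix μ G H hA hPm hApos
    rw [abs_le] at h
    have h3 : (μ (A ∩ P)).toReal / c ≤ phiMix μ G H + (μ P).toReal := by linarith [h.2]
    have h4 : (μ (A ∩ P)).toReal ≤ (phiMix μ G H + (μ P).toReal) * c :=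
      (div_le_iff₀ hApos).mp h3
    nlinarith
  have b2 : c * (μ Pᶜ).toReal - (μ (A ∩ Pᶜ)).toReal ≤ phiMix μ G H * c := by
    have h := abs_le_phiMix μ G H hA hPm.compl hApos
    rw [abs_le] at h
    have h3 : (μ Pᶜ).toReal - phiMix μ G H ≤ (μ (A ∩ Pᶜ)).toReal / c := by linarith [h.1]
    have h4 : ((μ Pᶜ).toReal - phiMix μ G H) * c ≤ (μ (A ∩ Pᶜ)).toReal :=
      (le_div_iff₀ hApos).mp h3
    nlinarith
  calc |(∫ ω in A, g ω ∂μ) - c * ∫ ω, g ω ∂μ|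
      = |∫ ω, g ω * (k ω - c) ∂μ| := by rw [step1, step2, step3]
    _ ≤ ∫ ω, |k ω - c| ∂μ := hbound1
    _ = (∫ ω in P, (k ω - c) ∂μ) + ∫ ω in Pᶜ, (c - k ω) ∂μ := split
    _ ≤ 2 * phiMix μ G H * c := by rw [e1, e2]; linarith

/-- One-sided a.e. bound on the conditional expectation. -/
lemma condexp_ae_le (hG : G ≤ m0) (hH : H ≤ m0) {g : Ω → ℝ} (hgm : Measurable[H] g)
    (hgb : ∀ ω, |g ω| ≤ 1) :
    ∀ᵐ ω ∂μ, (μ[g|G]) ω ≤ 2 * phiMix μ G H + ∫ ω', g ω' ∂μ := by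
  set φ := phiMix μ G H with hφ
  set r := ∫ ω', g ω' ∂μ with hr
  set f := μ[g|G] with hf
  have hgm0 : Measurable[m0] g := hgm.mono hH le_rfl
  have hgint : Integrable g μ := integrable_of_abs_le_one μ hgm0 hgb
  have hfSM : StronglyMeasurable[G] f := stronglyMeasurable_condExp
  have hnull : ∀ n : ℕ, μ {ω | 2 * φ + r + 1 / (n + 1) ≤ f ω} = 0 := by
    intro n
    set A := {ω | 2 * φ + r + 1 / (n + 1 : ℝ) ≤ f ω} with hAdef
    have hAG : MeasurableSet[G] A := m_setle G hfSM.measurable _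
    by_contra h0
    have hApos : 0 < (μ A).toReal := ENNReal.toReal_pos h0 (measure_ne_top μ A)
    have h1 : (2 * φ + r + 1 / (n + 1)) * (μ A).toReal ≤ ∫ ω in A, f ω ∂μ :=
      h_constle μ (hG A hAG) (fun ω hω => hω) (h_intOn μ integrable_condExp A)
    have h2 : ∫ ω in A, f ω ∂μ = ∫ ω in A, g ω ∂μ := setIntegral_condExp hG hgint hAG
    have h3 := key_abs μ G H hG hH hgm hgb hAG
    rw [abs_le] at h3
    have hn : (0 : ℝ) < 1 / (n + 1) := by positivity
    have hprod : 0 < 1 / (n + 1 : ℝ) * (μ A).toReal := mul_pos hn hApos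
    nlinarith [h3.2]
  have hsub : {ω | ¬ f ω ≤ 2 * φ + r} ⊆
      ⋃ n : ℕ, {ω | 2 * φ + r + 1 / (n + 1) ≤ f ω} := by
    intro ω hω
    have hlt : 2 * φ + r < f ω := not_le.mp hω
    obtain ⟨n, hn⟩ := exists_nat_one_div_lt (sub_pos.mpr hlt)
    exact Set.mem_iUnion.mpr ⟨n, by simp only [Set.mem_setOf_eq]; linarith⟩
  exact ae_iff.mpr (measure_mono_null hsub (measure_iUnion_null hnull))

/-- Two-sided a.e. bound. -/
lemma condexp_ae_abs_le (hG : G ≤ m0) (hH : H ≤ m0) {g : Ω → ℝ} (hgm : Measurable[H] g)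
    (hgb : ∀ ω, |g ω| ≤ 1) :
    ∀ᵐ ω ∂μ, |(μ[g|G]) ω - ∫ ω', g ω' ∂μ| ≤ 2 * phiMix μ G H := by
  have h1 := condexp_ae_le μ G H hG hH hgm hgb
  have hgm' : Measurable[H] (-g) := m_neg H hgm
  have hgb' : ∀ ω, |(-g) ω| ≤ 1 := fun ω => by simpa using hgb ω
  have h2 := condexp_ae_le μ G H hG hH hgm' hgb'
  have h3 : μ[-g|G] =ᵐ[μ] -μ[g|G] := condExp_neg g G
  have h4 : ∫ ω', (-g) ω' ∂μ = -∫ ω', g ω' ∂μ := by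
    simp only [Pi.neg_apply]
    exact integral_neg g
  rw [h4] at h2
  filter_upwards [h1, h2, h3] with ω hω1 hω2 hω3
  rw [hω3] at hω2
  simp only [Pi.neg_apply] at hω2
  rw [abs_le]
  constructor <;> linarith

/-- Every element of the RHS set is at most `2 φ`. -/
lemma rhs_mem_le (hG : G ≤ m0) (hH : H ≤ m0) {x : ℝ}
    (hx : ∃ g : Ω → ℝ, Measurable[H] g ∧ eLpNorm g ⊤ μ ≤ 1 ∧
      x = (eLpNorm (fun ω => (μ[g|G]) ω - ∫ ω', g ω' ∂μ) ⊤ μ).toReal) :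
    x ≤ 2 * phiMix μ G H := by
  obtain ⟨g, hgm, hg1, rfl⟩ := hx
  have hae : ∀ᵐ ω ∂μ, |g ω| ≤ 1 := by
    have h := enorm_ae_le_eLpNormEssSup g μ
    rw [← eLpNorm_exponent_top] at h
    filter_upwards [h] with ω hω
    have h2 : (‖g ω‖₊ : ℝ≥0∞) ≤ 1 := hω.trans hg1
    have h3 : ‖g ω‖₊ ≤ (1 : NNReal) := by exact_mod_cast h2
    calc |g ω| = (‖g ω‖₊ : ℝ) := by simp [Real.norm_eq_abs]
    _ ≤ 1 := by exact_mod_cast h3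
  set g' : Ω → ℝ := fun ω => max (-1) (min (g ω) 1) with hg'def
  have hg'm : Measurable[H] g' := m_clamp H hgm
  have hg'b : ∀ ω, |g' ω| ≤ 1 := fun ω =>
    abs_le.mpr ⟨le_max_left _ _, max_le (by norm_num) (min_le_right _ _)⟩
  have hgg' : g =ᵐ[μ] g' := by
    filter_upwards [hae] with ω hω
    rw [abs_le] at hω
    simp [hg'def, min_eq_left hω.2, max_eq_right hω.1]
  have hcond : μ[g|G] =ᵐ[μ] μ[g'|G] := condExp_congr_ae hgg'
  have hint_eq : ∫ ω', g ω' ∂μ = ∫ ω', g' ω' ∂μ := integral_congr_ae hgg'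
  have habs := condexp_ae_abs_le μ G H hG hH hg'm hg'b
  have hbound : ∀ᵐ ω ∂μ, ‖(μ[g|G]) ω - ∫ ω', g ω' ∂μ‖ ≤ 2 * phiMix μ G H := by
    filter_upwards [habs, hcond] with ω h1 h2
    rw [Real.norm_eq_abs, h2, hint_eq]
    exact h1
  have h2 : eLpNorm (fun ω => (μ[g|G]) ω - ∫ ω', g ω' ∂μ) ⊤ μ ≤
      ENNReal.ofReal (2 * phiMix μ G H) := by
    simpa using eLpNorm_le_of_ae_bound (p := (⊤ : ℝ≥0∞)) hbound
  exact ENNReal.toReal_le_of_le_ofReal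
    (mul_nonneg (by norm_num) (phiMix_nonneg μ G H)) h2

/-- Witness function for the lower bound. -/
lemma exists_witness (hG : G ≤ m0) (hH : H ≤ m0) {A B : Set Ω}
    (hA : MeasurableSet[G] A) (hB : MeasurableSet[H] B) (hApos : 0 < (μ A).toReal) :
    ∃ g : Ω → ℝ, Measurable[H] g ∧ eLpNorm g ⊤ μ ≤ 1 ∧
      2 * |(μ (A ∩ B)).toReal / (μ A).toReal - (μ B).toReal| ≤
        (eLpNorm (fun ω => (μ[g|G]) ω - ∫ ω', g ω' ∂μ) ⊤ μ).toReal := by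
  set g : Ω → ℝ := fun ω => B.indicator (fun _ => (2 : ℝ)) ω - 1 with hgdef
  have hgm : Measurable[H] g := m_indsub H hB
  have hgb : ∀ ω, |g ω| ≤ 1 := by
    intro ω
    by_cases h : ω ∈ B <;> simp [hgdef, Set.indicator_apply, h] <;> norm_num
  have hgm0 : Measurable[m0] g := hgm.mono hH le_rfl
  have hgint : Integrable g μ := integrable_of_abs_le_one μ hgm0 hgb
  have hgnorm : eLpNorm g ⊤ μ ≤ 1 := by
    have h := eLpNorm_le_of_ae_bound (p := (⊤ : ℝ≥0∞)) (μ := μ) (f := g) (C := 1)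
      (Filter.Eventually.of_forall fun ω => by simpa [Real.norm_eq_abs] using hgb ω)
    simpa using h
  refine ⟨g, hgm, hgnorm, ?_⟩
  set f := μ[g|G] with hf
  set r := ∫ ω', g ω' ∂μ with hr
  set N := eLpNorm (fun ω => f ω - r) ⊤ μ with hN
  have habs := condexp_ae_abs_le μ G H hG hH hgm hgb
  have hNle : N ≤ ENNReal.ofReal (2 * phiMix μ G H) := by
    rw [hN]
    simpa using eLpNorm_le_of_ae_bound (p := (⊤ : ℝ≥0∞)) (μ := μ)
      (C := 2 * phiMix μ G H)
      (habs.mono fun ω h => by simpa [Real.norm_eq_abs] using h)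
  have hNtop : N ≠ ⊤ := (hNle.trans_lt ENNReal.ofReal_lt_top).ne
  have haeN : ∀ᵐ ω ∂μ, ‖f ω - r‖ ≤ N.toReal := by
    have h := enorm_ae_le_eLpNormEssSup (fun ω => f ω - r) μ
    filter_upwards [h] with ω hω
    have h2 : (‖f ω - r‖₊ : ℝ≥0∞) ≤ N := by
      rw [hN, eLpNorm_exponent_top]; exact hω
    have h3 := ENNReal.toReal_mono hNtop h2
    simpa using h3
  have hIup : |∫ ω in A, (f ω - r) ∂μ| ≤ N.toReal * (μ A).toReal :=
    h_setbound μ haeN A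
  have hfA : ∫ ω in A, f ω ∂μ = 2 * (μ (B ∩ A)).toReal - (μ A).toReal := by
    rw [hf, setIntegral_condExp hG hgint hA, hgdef]
    exact h_wint1 μ (hG A hA) (hH B hB)
  have hrval : r = 2 * (μ B).toReal - 1 := by
    rw [hr, hgdef]
    exact h_wint2 μ (hH B hB)
  have hIval : ∫ ω in A, (f ω - r) ∂μ =
      2 * ((μ (B ∩ A)).toReal - (μ B).toReal * (μ A).toReal) := by
    rw [h_subconst μ integrable_condExp A r, hfA, hrval]
    ring
  have hkey : 2 * |(μ (B ∩ A)).toReal - (μ B).toReal * (μ A).toReal| ≤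
      N.toReal * (μ A).toReal := by
    have h2 : |∫ ω in A, (f ω - r) ∂μ| =
        2 * |(μ (B ∩ A)).toReal - (μ B).toReal * (μ A).toReal| := by
      rw [hIval, abs_mul]
      norm_num
    rw [h2] at hIup
    exact hIup
  have hcomm : (μ (B ∩ A)).toReal = (μ (A ∩ B)).toReal := by rw [Set.inter_comm]
  rw [hcomm] at hkey
  have hdiv : |(μ (A ∩ B)).toReal / (μ A).toReal - (μ B).toReal| =
      |(μ (A ∩ B)).toReal - (μ B).toReal * (μ A).toReal| / (μ A).toReal := by
    have h : (μ (A ∩ B)).toReal / (μ A).toReal - (μ B).toReal =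
        ((μ (A ∩ B)).toReal - (μ B).toReal * (μ A).toReal) / (μ A).toReal := by
      field_simp
    rw [h, abs_div, abs_of_pos hApos]
  rw [hdiv, ← mul_div_assoc, div_le_iff₀ hApos]
  exact hkey

lemma zero_mem_rhs (hG : G ≤ m0) :
    (0 : ℝ) ∈ {x : ℝ | ∃ g : Ω → ℝ, Measurable[H] g ∧ eLpNorm g ⊤ μ ≤ 1 ∧
      x = (eLpNorm (fun ω => (μ[g|G]) ω - ∫ ω', g ω' ∂μ) ⊤ μ).toReal} := by
  refine ⟨fun _ => (0 : ℝ), measurable_const, ?_, ?_⟩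
  · have h1 : (fun _ : Ω => (0 : ℝ)) = (0 : Ω → ℝ) := rfl
    rw [h1, eLpNorm_zero]
    exact zero_le_one
  · have h0 : μ[(fun _ => (0 : ℝ))|G] = (0 : Ω → ℝ) := condExp_zero
    have h1 : (fun ω : Ω => (μ[(fun _ => (0 : ℝ))|G]) ω - ∫ ω', (fun _ => (0 : ℝ)) ω' ∂μ) =
        (0 : Ω → ℝ) := by
      funext ω
      rw [h0]
      simp
    rw [h1, eLpNorm_zero]
    simp

end TwoSpace

end PhiMixAux

theorem stmt2 {Ω : Type*} [m0 : MeasurableSpace Ω] (μ : Measure Ω) [IsProbabilityMeasure μ]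
    (G H : MeasurableSpace Ω) (hG : G ≤ m0) (hH : H ≤ m0) :
    2 * phiMix μ G H =
      sSup {x : ℝ | ∃ g : Ω → ℝ, Measurable[H] g ∧ eLpNorm g ⊤ μ ≤ 1 ∧
        x = (eLpNorm (fun ω => (μ[g|G]) ω - ∫ ω', g ω' ∂μ) ⊤ μ).toReal} := by
  classical
  set S₂ := {x : ℝ | ∃ g : Ω → ℝ, Measurable[H] g ∧ eLpNorm g ⊤ μ ≤ 1 ∧
    x = (eLpNorm (fun ω => (μ[g|G]) ω - ∫ ω', g ω' ∂μ) ⊤ μ).toReal} with hS₂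
  have hub : ∀ x ∈ S₂, x ≤ 2 * phiMix μ G H := fun x hx =>
    PhiMixAux.rhs_mem_le μ G H hG hH hx
  have h0 : (0 : ℝ) ∈ S₂ := PhiMixAux.zero_mem_rhs μ G H hG
  have hbdd : BddAbove S₂ := ⟨2 * phiMix μ G H, fun x hx => hub x hx⟩
  apply le_antisymm
  · have hle : phiMix μ G H ≤ sSup S₂ / 2 := by
      rw [PhiMixAux.phiMix_eq]
      apply csSup_le ⟨0, PhiMixAux.zero_mem_phiSet μ G H⟩
      rintro x ⟨A, B, hA, hB, hApos, rfl⟩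
      obtain ⟨g, hgm, hg1, hgle⟩ := PhiMixAux.exists_witness μ G H hG hH hA hB hApos
      have hmem : (eLpNorm (fun ω => (μ[g|G]) ω - ∫ ω', g ω' ∂μ) ⊤ μ).toReal ∈ S₂ :=
        ⟨g, hgm, hg1, rfl⟩
      have hle2 := le_csSup hbdd hmem
      linarith
    linarith
  · exact csSup_le ⟨0, h0⟩ hub
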